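/- Let C be a small category with finite limits embedded as a full subcategory of a regular category D, closed under finite limits. Then the canonical functor U : C_{reg/lex} → D sending an object (f : X → Y) of the regular completion to the image Im(f) in D, and a morphism [l] : (f : X→Y) → (f' : X'→Y') to the unique morphism l̃ : Im(f) → Im(f') with l̃ ∘ f̄ = f̄' ∘ l, is well-defined (independent of the representative l) and faithful. -/
import Mathlib


open CategoryTheory Limits

/-- Let `C` be a small category with finite limits, embedded as a full subcategory of a
regular category `D` closed under finite limits (via a fully faithful finite-limit-preserving
functor `ι`).  For objects `(f : X ⟶ Y)`, `(f' : X' ⟶ Y')` of the regular completion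
`C_{reg/lex}` and a representative `l : X ⟶ X'` of a morphism (i.e. `ι(f') ∘ ι(l)`
coequalizes the kernel pair of `ι(f)`), there is a unique morphism
`l̃ : Im(ι f) ⟶ Im(ι f')` with `l̃ ∘ f̄ = f̄' ∘ ι(l)`; it is independent of the choice of the
representative `l` (two representatives `l₁ ~ l₂`, i.e. `f' ∘ l₁ = f' ∘ l₂`, induce the same
morphism: well-definedness), and conversely equal induced morphisms come from equivalent
representatives (faithfulness). -/
theorem regular_completion_comparison_welldefined_and_faithful
    {C : Type*} [SmallCategory C] [HasFiniteLimits C]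
    {D : Type*} [Category D] [HasFiniteLimits D]
    (hcoeq : ∀ {A B : D} (g : A ⟶ B), HasCoequalizer (pullback.fst g g) (pullback.snd g g))
    (hstab : ∀ {A B Z : D} (g : A ⟶ B) (h : Z ⟶ B),
      RegularEpi g → RegularEpi (pullback.snd g h))
    (ι : C ⥤ D) [ι.Full] [ι.Faithful] [PreservesFiniteLimits ι]
    {X Y X' Y' : C} (f : X ⟶ Y) (f' : X' ⟶ Y') :
    haveI := hcoeq (ι.map f)
    haveI := hcoeq (ι.map f')
    -- existence and uniqueness of the induced morphism on images
    (∀ (l : X ⟶ X'),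
        (pullback.fst (ι.map f) (ι.map f) ≫ (ι.map l ≫ ι.map f')
          = pullback.snd (ι.map f) (ι.map f) ≫ (ι.map l ≫ ι.map f')) →
        ∃! lt : coequalizer (pullback.fst (ι.map f) (ι.map f))
                  (pullback.snd (ι.map f) (ι.map f)) ⟶
                coequalizer (pullback.fst (ι.map f') (ι.map f'))
                  (pullback.snd (ι.map f') (ι.map f')),
          coequalizer.π _ _ ≫ lt = ι.map l ≫ coequalizer.π _ _) ∧
    -- well-definedness and faithfulness: equal composites with f' iff equal induced maps
    (∀ (l₁ l₂ : X ⟶ X')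
        (h₁ : pullback.fst (ι.map f) (ι.map f) ≫ (ι.map l₁ ≫ ι.map f')
          = pullback.snd (ι.map f) (ι.map f) ≫ (ι.map l₁ ≫ ι.map f'))
        (h₂ : pullback.fst (ι.map f) (ι.map f) ≫ (ι.map l₂ ≫ ι.map f')
          = pullback.snd (ι.map f) (ι.map f) ≫ (ι.map l₂ ≫ ι.map f'))
        (lt₁ lt₂ : coequalizer (pullback.fst (ι.map f) (ι.map f))
                  (pullback.snd (ι.map f) (ι.map f)) ⟶
                coequalizer (pullback.fst (ι.map f') (ι.map f'))
                  (pullback.snd (ι.map f') (ι.map f'))),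
        coequalizer.π _ _ ≫ lt₁ = ι.map l₁ ≫ coequalizer.π _ _ →
        coequalizer.π _ _ ≫ lt₂ = ι.map l₂ ≫ coequalizer.π _ _ →
        (l₁ ≫ f' = l₂ ≫ f' ↔ lt₁ = lt₂)) := by
  haveI := hcoeq (ι.map f)
  haveI := hcoeq (ι.map f')
  constructor
  · intro l h
    have h' : (pullback.fst (ι.map f) (ι.map f) ≫ ι.map l) ≫ ι.map f'
        = (pullback.snd (ι.map f) (ι.map f) ≫ ι.map l) ≫ ι.map f' := by
      simpa using h
    have key : (pullback.fst (ι.map f) (ι.map f) ≫ ι.map l) ≫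
          coequalizer.π (pullback.fst (ι.map f') (ι.map f'))
            (pullback.snd (ι.map f') (ι.map f'))
        = (pullback.snd (ι.map f) (ι.map f) ≫ ι.map l) ≫
          coequalizer.π (pullback.fst (ι.map f') (ι.map f'))
            (pullback.snd (ι.map f') (ι.map f')) := by
      calc (pullback.fst (ι.map f) (ι.map f) ≫ ι.map l) ≫ coequalizer.π _ _
          = (pullback.lift _ _ h' ≫ pullback.fst (ι.map f') (ι.map f')) ≫
              coequalizer.π _ _ := by rw [pullback.lift_fst]
        _ = (pullback.lift _ _ h' ≫ pullback.snd (ι.map f') (ι.map f')) ≫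
              coequalizer.π _ _ := by
            rw [Category.assoc, Category.assoc, coequalizer.condition]
        _ = (pullback.snd (ι.map f) (ι.map f) ≫ ι.map l) ≫ coequalizer.π _ _ := by
            rw [pullback.lift_snd]
    refine ⟨coequalizer.desc (ι.map l ≫ coequalizer.π _ _)
      (by simpa using key), by simp, ?_⟩
    intro y hy
    apply coequalizer.hom_ext
    rw [hy, coequalizer.π_desc]
  · intro l₁ l₂ h₁ h₂ lt₁ lt₂ e₁ e₂
    constructor
    · intro hl
      have hι : ι.map l₁ ≫ ι.map f' = ι.map l₂ ≫ ι.map f' := by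
        rw [← ι.map_comp, ← ι.map_comp, hl]
      have heq : ι.map l₁ ≫ coequalizer.π (pullback.fst (ι.map f') (ι.map f'))
            (pullback.snd (ι.map f') (ι.map f'))
          = ι.map l₂ ≫ coequalizer.π (pullback.fst (ι.map f') (ι.map f'))
            (pullback.snd (ι.map f') (ι.map f')) := by
        calc ι.map l₁ ≫ coequalizer.π _ _
            = (pullback.lift _ _ hι ≫ pullback.fst (ι.map f') (ι.map f')) ≫
                coequalizer.π _ _ := by rw [pullback.lift_fst]
          _ = (pullback.lift _ _ hι ≫ pullback.snd (ι.map f') (ι.map f')) ≫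
                coequalizer.π _ _ := by
              rw [Category.assoc, Category.assoc, coequalizer.condition]
          _ = ι.map l₂ ≫ coequalizer.π _ _ := by rw [pullback.lift_snd]
      apply coequalizer.hom_ext
      rw [e₁, e₂, heq]
    · intro hlt
      apply ι.map_injective
      have m := coequalizer.π_desc (f := pullback.fst (ι.map f') (ι.map f'))
        (g := pullback.snd (ι.map f') (ι.map f')) (ι.map f') pullback.condition
      calc ι.map (l₁ ≫ f') = ι.map l₁ ≫ ι.map f' := ι.map_comp _ _
        _ = ι.map l₁ ≫ coequalizer.π _ _ ≫ coequalizer.desc (ι.map f') pullback.condition := by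
              rw [m]
        _ = (coequalizer.π _ _ ≫ lt₁) ≫ coequalizer.desc (ι.map f') pullback.condition := by
              rw [← Category.assoc, ← e₁, Category.assoc]
        _ = (coequalizer.π _ _ ≫ lt₂) ≫ coequalizer.desc (ι.map f') pullback.condition := by
              rw [hlt]
        _ = ι.map l₂ ≫ coequalizer.π _ _ ≫ coequalizer.desc (ι.map f') pullback.condition := by
              rw [e₂, Category.assoc]
        _ = ι.map (l₂ ≫ f') := by rw [m, ← ι.map_comp]
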